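/- arXiv:2006.06371 — 2 statements merged into one kernel-verified Lean document; each statement's English description precedes it below -/
import Mathlib

section
/- Let G be a metabelian group given by a full-rank presentation G = ⟨A ∣ R⟩_M with |R| ≥ |A|. Then G is virtually abelian. -/
/-- Exponent sum of the generator `j` in an element of the free group. -/
def expSum {n : ℕ} (j : Fin n) (w : FreeGroup (Fin n)) : ℤ :=
  Multiplicative.toAdd
    ((FreeGroup.lift fun i => Multiplicative.ofAdd (if i = j then (1 : ℤ) else 0)) w)

/-- The relation matrix `M(A,R)` of a presentation with `n` generators and `m` relators:
its `(i,j)` entry is the exponent sum of `a_j` in `r_i`. -/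
def relMatrix {n m : ℕ} (R : Fin m → FreeGroup (Fin n)) : Matrix (Fin m) (Fin n) ℤ :=
  fun i j => expSum j (R i)

instance derivedSeriesNormal {G : Type*} [Group G] (k : ℕ) : (derivedSeries G k).Normal :=
  derivedSeries_normal G k

/-- The normal subgroup `N · F''` of the free group determined by the relators `R`,
where `N` is the normal closure of `R` and `F''` is the second derived subgroup. -/
def metabelianRel {n : ℕ} (R : Set (FreeGroup (Fin n))) : Subgroup (FreeGroup (Fin n)) :=
  Subgroup.normalClosure (R ∪ (derivedSeries (FreeGroup (Fin n)) 2 : Subgroup (FreeGroup (Fin n))))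

instance {n : ℕ} (R : Set (FreeGroup (Fin n))) : (metabelianRel R).Normal :=
  Subgroup.normalClosure_normal

/-- The metabelian group presented by `⟨A ∣ R⟩_M`, i.e. `F(A)/(N·F(A)'')`. -/
abbrev MetabelianPresented {n : ℕ} (R : Set (FreeGroup (Fin n))) : Type :=
  FreeGroup (Fin n) ⧸ metabelianRel R

/-- The free metabelian group of rank `k`: the quotient of the free group of rank `k`
by its second derived subgroup. -/
abbrev FreeMetabelian (k : ℕ) : Type :=
  FreeGroup (Fin k) ⧸ derivedSeries (FreeGroup (Fin k)) 2

/-- A group is virtually abelian if it has an abelian subgroup of finite index. -/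
def VirtuallyAbelian (G : Type*) [Group G] : Prop :=
  ∃ H : Subgroup G, (∀ x ∈ H, ∀ y ∈ H, x * y = y * x) ∧ H.FiniteIndex

open Matrix
open commutatorElement

section Aux

theorem cast_mulVec' {a b : ℕ} (M : Matrix (Fin a) (Fin b) ℤ) (z : Fin b → ℤ) (i : Fin a) :
    ((M *ᵥ z) i : ℚ) = (M.map (Int.cast : ℤ → ℚ) *ᵥ (fun j => (z j : ℚ))) i := by
  simp [Matrix.mulVec, dotProduct, Matrix.map_apply]

theorem exists_int_mul' {k : ℕ} (x : Fin k → ℚ) :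
    ∃ (d : ℤ) (z : Fin k → ℤ), d ≠ 0 ∧ ∀ i, (z i : ℚ) = (d : ℚ) * x i := by
  obtain ⟨b, hb⟩ := IsLocalization.exist_integer_multiples_of_finite (nonZeroDivisors ℤ) x
  choose z hz using hb
  exact ⟨(b : ℤ), z, nonZeroDivisors.coe_ne_zero b, fun i => by
    simpa [Algebra.smul_def, eq_comm] using hz i⟩

theorem kerBot' {n m : ℕ} (M : Matrix (Fin m) (Fin n) ℤ) (h : M.rank = n) :
    LinearMap.ker M.mulVecLin = ⊥ := by
  have h1 := LinearMap.rank_range_add_rank_ker M.mulVecLin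
  rw [rank_fin_fun] at h1
  have h2 : Module.rank ℤ (LinearMap.range M.mulVecLin) = n := by
    rw [← Module.finrank_eq_rank]; exact_mod_cast h
  rw [h2] at h1
  have h4 : (n : Cardinal) + Module.rank ℤ (LinearMap.ker M.mulVecLin) = (n : Cardinal) + 0 := by
    rw [add_zero]; exact h1
  exact Submodule.rank_eq_zero.mp
    (Cardinal.eq_of_add_eq_add_left h4 (Cardinal.nat_lt_aleph0 n))

theorem torsion_mod_rows' {n m : ℕ} (M : Matrix (Fin m) (Fin n) ℤ) (h : M.rank = n)
    (y : Fin n → ℤ) : ∃ d : ℤ, d ≠ 0 ∧ d • y ∈ LinearMap.range Mᵀ.mulVecLin := by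
  set Mq : Matrix (Fin m) (Fin n) ℚ := M.map (Int.cast : ℤ → ℚ) with hMq
  have hkerq : LinearMap.ker Mq.mulVecLin = ⊥ := by
    rw [eq_bot_iff]
    intro x hx
    simp only [LinearMap.mem_ker, mulVecLin_apply] at hx
    obtain ⟨d, z, hd, hz⟩ := exists_int_mul' x
    have hMz : M.mulVec z = 0 := by
      have hcast : ∀ i, ((M *ᵥ z) i : ℚ) = 0 := by
        intro i
        rw [cast_mulVec' M z i]
        have : (fun j => ((z j : ℚ))) = fun j => (d : ℚ) * x j := by
          funext j; exact hz j
        rw [this]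
        have : (M.map (Int.cast : ℤ → ℚ) *ᵥ fun j => (d:ℚ) * x j) = (d:ℚ) • (Mq *ᵥ x) := by
          rw [← mulVec_smul]
          congr 1
        rw [this, hx]
        simp
      funext i
      exact_mod_cast hcast i
    have hz0 : z = 0 := by
      have := kerBot' M h
      have hzk : z ∈ LinearMap.ker M.mulVecLin := by
        simpa [LinearMap.mem_ker] using hMz
      rw [this] at hzk
      simpa using hzk
    have : ∀ j, (d : ℚ) * x j = 0 := by
      intro j; rw [← hz j, hz0]; simp
    have hx0 : x = 0 := by
      funext j
      rcases mul_eq_zero.mp (this j) with h' | h'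
      · exact absurd (by exact_mod_cast h' : (d:ℚ) = 0) (by exact_mod_cast hd)
      · exact h'
    simp [hx0]
  have hrkq : Mq.rank = n := by
    have := LinearMap.finrank_range_add_finrank_ker Mq.mulVecLin
    rw [hkerq] at this
    rw [finrank_bot, add_zero] at this
    rw [Matrix.rank, this, Module.finrank_fin_fun]
  have hrkqt : Mqᵀ.rank = n := by rw [Matrix.rank_transpose]; exact hrkq
  have hsurj : Function.Surjective Mqᵀ.mulVecLin := by
    rw [← LinearMap.range_eq_top]
    apply Submodule.eq_top_of_finrank_eq
    rw [← Matrix.rank, hrkqt, Module.finrank_fin_fun]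
  obtain ⟨xq, hxq⟩ := hsurj (fun j => (y j : ℚ))
  obtain ⟨d, z, hd, hz⟩ := exists_int_mul' xq
  refine ⟨d, hd, z, ?_⟩
  have key : ∀ j, ((Mᵀ *ᵥ z) j : ℚ) = ((d • y) j : ℚ) := by
    intro j
    rw [cast_mulVec' Mᵀ z j]
    have h1 : (fun i => ((z i : ℚ))) = fun i => (d : ℚ) * xq i := by
      funext i; exact hz i
    rw [h1]
    have h2 : (Mᵀ.map (Int.cast : ℤ → ℚ) *ᵥ fun i => (d:ℚ) * xq i) = (d:ℚ) • (Mqᵀ *ᵥ xq) := by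
      rw [← mulVec_smul]; congr 1
    rw [h2]
    rw [mulVecLin_apply] at hxq
    rw [hxq]
    simp [Pi.smul_apply]
  funext j
  exact_mod_cast key j

theorem hom_eq_prod_expSum' {n : ℕ} {C : Type*} [CommGroup C] (φ : FreeGroup (Fin n) →* C)
    (w : FreeGroup (Fin n)) :
    φ w = ∏ j : Fin n, (φ (FreeGroup.of j)) ^ (expSum j w) := by
  have key : φ = ∏ j : Fin n, (zpowersHom C (φ (FreeGroup.of j))).comp
      (FreeGroup.lift fun i => Multiplicative.ofAdd (if i = j then (1 : ℤ) else 0)) := by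
    apply FreeGroup.ext_hom
    intro a
    rw [MonoidHom.finset_prod_apply]
    have : ∀ j : Fin n, ((zpowersHom C (φ (FreeGroup.of j))).comp
        (FreeGroup.lift fun i => Multiplicative.ofAdd (if i = j then (1 : ℤ) else 0)))
          (FreeGroup.of a) = if a = j then φ (FreeGroup.of j) else 1 := by
      intro j
      simp only [MonoidHom.comp_apply, FreeGroup.lift_apply_of, zpowersHom_apply, toAdd_ofAdd]
      split_ifs <;> simp
    rw [Finset.prod_congr rfl (fun j _ => this j), Finset.prod_ite_eq]
    simp
  conv_lhs => rw [key]
  rw [MonoidHom.finset_prod_apply]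
  exact Finset.prod_congr rfl fun j _ => by
    simp only [MonoidHom.comp_apply, zpowersHom_apply]
    rfl

end Aux

/-- A metabelian group given by a full-rank presentation with
`|R| ≥ |A|` is virtually abelian. -/
theorem full_rank_virtually_abelian {n m : ℕ} (R : Fin m → FreeGroup (Fin n))
    (hfull : (relMatrix R).rank = min m n) (hm : n ≤ m) :
    VirtuallyAbelian (MetabelianPresented (Set.range R)) := by
  classical
  have hrank : (relMatrix R).rank = n := by rw [hfull, min_eq_right hm]
  set G := MetabelianPresented (Set.range R) with hG
  let π : FreeGroup (Fin n) →* G := QuotientGroup.mk' (metabelianRel (Set.range R))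
  have hπ : Function.Surjective π := QuotientGroup.mk'_surjective _
  have hπker : ∀ x ∈ metabelianRel (Set.range R), π x = 1 := by
    intro x hx
    rw [← MonoidHom.mem_ker, QuotientGroup.ker_mk']
    exact hx
  -- the second derived subgroup of G is trivial
  have hds2 : derivedSeries G 2 = ⊥ := by
    rw [← map_derivedSeries_eq hπ 2, eq_bot_iff]
    rintro g ⟨x, hx, rfl⟩
    rw [Subgroup.mem_bot]
    exact hπker x (Subgroup.subset_normalClosure (Set.mem_union_right _ hx))
  refine ⟨commutator G, ?_, ?_⟩
  · -- the commutator subgroup is abelian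
    intro x hx y hy
    have hmem : ⁅x, y⁆ ∈ derivedSeries G 2 := by
      have : derivedSeries G 2 = ⁅derivedSeries G 1, derivedSeries G 1⁆ := rfl
      rw [this]
      exact Subgroup.commutator_mem_commutator
        (by rwa [derivedSeries_one]) (by rwa [derivedSeries_one])
    rw [hds2, Subgroup.mem_bot] at hmem
    exact commutatorElement_eq_one_iff_mul_comm.mp hmem
  · -- finite index: the abelianization is finite
    let Ab := Abelianization G
    let φ : FreeGroup (Fin n) →* Ab := (Abelianization.of).comp π
    have hφ : Function.Surjective φ :=
      (QuotientGroup.mk_surjective).comp hπ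
    let v : Fin n → Additive Ab := fun j => Additive.ofMul (φ (FreeGroup.of j))
    let f : (Fin n → ℤ) →ₗ[ℤ] Additive Ab := Fintype.linearCombination ℤ v
    -- f kills each row of the relation matrix
    have hrow : ∀ i, (∑ j, (relMatrix R i j) • v j) = (0 : Additive Ab) := by
      intro i
      have h1 : φ (R i) = 1 := by
        show (Abelianization.of) (π (R i)) = 1
        rw [hπker (R i) (Subgroup.subset_normalClosure
          (Set.mem_union_left _ (Set.mem_range_self i))), _root_.map_one]
      have h2 := hom_eq_prod_expSum' φ (R i)
      rw [h1] at h2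
      have h3 : Additive.ofMul (∏ j : Fin n, (φ (FreeGroup.of j)) ^ (expSum j (R i)))
          = Additive.ofMul (1 : Ab) := by rw [← h2]
      rw [ofMul_prod] at h3
      simpa [relMatrix, v, ofMul_zpow] using h3
    -- the row space is contained in the kernel of f
    have hLker : LinearMap.range ((relMatrix R)ᵀ.mulVecLin) ≤ LinearMap.ker f := by
      rintro _ ⟨c, rfl⟩
      rw [LinearMap.mem_ker]
      show f ((relMatrix R)ᵀ *ᵥ c) = 0
      rw [Fintype.linearCombination_apply]
      have expand : ∀ j, ((relMatrix R)ᵀ *ᵥ c) j = ∑ i, c i * relMatrix R i j := by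
        intro j
        simp [Matrix.mulVec, dotProduct, Matrix.transpose_apply, mul_comm]
      calc (∑ j, ((relMatrix R)ᵀ *ᵥ c) j • v j)
          = ∑ j, ∑ i, (c i * relMatrix R i j) • v j := by
            refine Finset.sum_congr rfl fun j _ => ?_
            rw [expand j, Finset.sum_smul]
        _ = ∑ i, c i • (∑ j, (relMatrix R i j) • v j) := by
            rw [Finset.sum_comm]
            refine Finset.sum_congr rfl fun i _ => ?_
            rw [Finset.smul_sum]
            refine Finset.sum_congr rfl fun j _ => ?_
            rw [mul_smul]
        _ = 0 := by
            refine Finset.sum_eq_zero fun i _ => ?_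
            rw [hrow i, smul_zero]
    -- f is surjective
    have hfsurj : Function.Surjective f := by
      have hcl : Subgroup.closure (Set.range fun j => φ (FreeGroup.of j)) = (⊤ : Subgroup Ab) := by
        have h1 : Subgroup.closure (Set.range (FreeGroup.of : Fin n → FreeGroup (Fin n))) = ⊤ :=
          FreeGroup.closure_range_of _
        calc Subgroup.closure (Set.range fun j => φ (FreeGroup.of j))
            = Subgroup.closure (φ '' Set.range FreeGroup.of) := by
              rw [← Set.range_comp]; rfl
          _ = Subgroup.map φ (Subgroup.closure (Set.range FreeGroup.of)) :=
              (MonoidHom.map_closure φ _).symm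
          _ = Subgroup.map φ ⊤ := by rw [h1]
          _ = ⊤ := by
              rw [← MonoidHom.range_eq_map]
              exact MonoidHom.range_eq_top_of_surjective φ hφ
      intro x
      have hx : Additive.toMul x ∈ Subgroup.closure (Set.range fun j => φ (FreeGroup.of j)) := by
        rw [hcl]; trivial
      have : ∀ (g : Ab), g ∈ Subgroup.closure (Set.range fun j => φ (FreeGroup.of j)) →
          Additive.ofMul g ∈ LinearMap.range f := by
        intro g hg
        induction hg using Subgroup.closure_induction with
        | mem s hs =>
            obtain ⟨j, rfl⟩ := hs
            refine ⟨Pi.single j 1, ?_⟩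
            show Fintype.linearCombination ℤ v (Pi.single j 1) = _
            rw [Fintype.linearCombination_apply_single]
            simp [v]
        | one => simp only [ofMul_one]; exact (LinearMap.range f).zero_mem
        | mul a b _ _ ha hb =>
            have := (LinearMap.range f).add_mem ha hb
            simpa [ofMul_mul] using this
        | inv a _ ha =>
            have := (LinearMap.range f).neg_mem ha
            simpa [ofMul_inv] using this
      obtain ⟨w, hw⟩ := this (Additive.toMul x) hx
      exact ⟨w, by simpa using hw⟩
    -- the quotient by the row space is finite
    let L := LinearMap.range ((relMatrix R)ᵀ.mulVecLin)
    have hfinQ : Finite ((Fin n → ℤ) ⧸ L) := by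
      have hFin : Module.Finite ℤ ((Fin n → ℤ) ⧸ L) :=
        Module.Finite.of_surjective L.mkQ (Submodule.Quotient.mk_surjective L)
      apply Module.finite_of_fg_torsion
      intro x
      obtain ⟨y, rfl⟩ := Submodule.Quotient.mk_surjective L x
      obtain ⟨d, hd, hmem⟩ := torsion_mod_rows' (relMatrix R) hrank y
      refine ⟨⟨d, mem_nonZeroDivisors_iff_ne_zero.mpr hd⟩, ?_⟩
      rw [Submonoid.smul_def]
      show (d : ℤ) • Submodule.Quotient.mk y = 0
      rw [← Submodule.Quotient.mk_smul, Submodule.Quotient.mk_eq_zero]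
      exact hmem
    -- hence the abelianization of G is finite
    have hfinAb : Finite Ab := by
      let g : ((Fin n → ℤ) ⧸ L) →ₗ[ℤ] Additive Ab := L.liftQ f hLker
      have hg : Function.Surjective g := by
        intro x
        obtain ⟨w, hw⟩ := hfsurj x
        exact ⟨Submodule.Quotient.mk w, by rwa [Submodule.liftQ_apply]⟩
      have : Finite (Additive Ab) := Finite.of_surjective g hg
      exact Finite.of_equiv (Additive Ab) Additive.ofMul.symm
    have : Finite (G ⧸ commutator G) := hfinAb
    exact Subgroup.finiteIndex_of_finite_quotient (H := commutator G)
end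

section
/- Let m ≤ n and let G = ⟨a_1,…,a_n ∣ a_1^{α_1} = c_1, …, a_m^{α_m} = c_m⟩_M be a metabelian presented group, where each c_i lies in the derived subgroup [F(A),F(A)] of the free group F(A) and each α_i is a nonzero integer. Set K = ⟨a_1,…,a_m⟩ ≤ G and N = α_1⋯α_m. Then K ∩ [G,G] is abelian, g^N ∈ K ∩ [G,G] for every g ∈ K, and the quotient K/(K ∩ [G,G]) is finite. -/
/-- In the metabelian group presented in Smith normal form
`⟨a_1,…,a_n ∣ a_1^{α_1} = c_1, …, a_m^{α_m} = c_m⟩_M` with `c_i ∈ [F,F]` and `α_i ≠ 0`,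
the subgroup `K = ⟨a_1,…,a_m⟩` satisfies: `K ∩ [G,G]` is abelian, `g^N ∈ K ∩ [G,G]` for all
`g ∈ K` where `N = α_1 ⋯ α_m`, and the quotient `K/(K ∩ [G,G])` is finite. -/
theorem smith_normal_form_K_virtually_abelian {n m : ℕ} (hmn : m ≤ n)
    (α : Fin m → ℤ) (hα : ∀ i, α i ≠ 0)
    (c : Fin m → FreeGroup (Fin n)) (hc : ∀ i, c i ∈ commutator (FreeGroup (Fin n)))
    (R : Fin m → FreeGroup (Fin n))
    (hR : ∀ i, R i = FreeGroup.of (Fin.castLE hmn i) ^ α i * (c i)⁻¹)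
    (π : FreeGroup (Fin n) →* MetabelianPresented (Set.range R))
    (hπ : π = QuotientGroup.mk' (metabelianRel (Set.range R)))
    (K : Subgroup (MetabelianPresented (Set.range R)))
    (hK : K = Subgroup.closure (Set.range fun i : Fin m => π (FreeGroup.of (Fin.castLE hmn i))))
    (N : ℤ) (hN : N = ∏ i, α i) :
    (∀ x ∈ K ⊓ commutator (MetabelianPresented (Set.range R)),
      ∀ y ∈ K ⊓ commutator (MetabelianPresented (Set.range R)), x * y = y * x) ∧
    (∀ g ∈ K, g ^ N ∈ K ⊓ commutator (MetabelianPresented (Set.range R))) ∧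
    ((commutator (MetabelianPresented (Set.range R))).subgroupOf K).FiniteIndex := by
  classical
  set G := MetabelianPresented (Set.range R) with hG
  have hsurj : Function.Surjective π := by
    rw [hπ]; exact QuotientGroup.mk'_surjective _
  -- the second derived subgroup of G is trivial
  have hD : derivedSeries (FreeGroup (Fin n)) 2 ≤ metabelianRel (Set.range R) :=
    fun x hx => Subgroup.subset_normalClosure (Set.mem_union_right _ hx)
  have h2 : ∀ x ∈ derivedSeries G 2, x = 1 := by
    intro x hx
    rw [← map_derivedSeries_eq (f := π) hsurj 2] at hx
    obtain ⟨y, hy, rfl⟩ := hx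
    rw [hπ]
    exact (QuotientGroup.eq_one_iff y).2 (hD hy)
  -- commutator G is abelian
  have hab : ∀ x ∈ commutator G, ∀ y ∈ commutator G, x * y = y * x := by
    intro x hx y hy
    open scoped commutatorElement in
    have hmem : ⁅x, y⁆ ∈ derivedSeries G 2 := by
      show ⁅x, y⁆ ∈ ⁅derivedSeries G 1, derivedSeries G 1⁆
      exact Subgroup.commutator_mem_commutator
        ((derivedSeries_one G).symm ▸ hx) ((derivedSeries_one G).symm ▸ hy)
    exact commutatorElement_eq_one_iff_mul_comm.mp (h2 _ hmem)
  -- abelianization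
  set φ : G →* Abelianization G := Abelianization.of with hφ
  have hker : ∀ g : G, φ g = 1 ↔ g ∈ commutator G := fun g => QuotientGroup.eq_one_iff g
  -- π maps commutator to commutator
  have hπcomm : ∀ x ∈ commutator (FreeGroup (Fin n)), π x ∈ commutator G := by
    intro x hx
    have : π x ∈ (derivedSeries (FreeGroup (Fin n)) 1).map π :=
      Subgroup.mem_map_of_mem π ((derivedSeries_one (FreeGroup (Fin n))).symm ▸ hx)
    rw [map_derivedSeries_eq hsurj 1, derivedSeries_one] at this
    exact this
  -- generators have α i-th power in the commutator subgroup
  have hgen : ∀ i : Fin m, (π (FreeGroup.of (Fin.castLE hmn i))) ^ (α i) ∈ commutator G := by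
    intro i
    have h1 : π (R i) = 1 := by
      rw [hπ]
      exact (QuotientGroup.eq_one_iff _).2
        (Subgroup.subset_normalClosure (Set.mem_union_left _ ⟨i, rfl⟩))
    have heq : π (FreeGroup.of (Fin.castLE hmn i)) ^ (α i) = π (R i) * π (c i) := by
      rw [← map_mul, hR i, ← map_zpow]
      congr 1
      group
    rw [heq, h1, one_mul]
    exact hπcomm _ (hc i)
  have hN0 : N ≠ 0 := by
    rw [hN]
    exact Finset.prod_ne_zero_iff.2 fun i _ => hα i
  -- every element of K has φ g ^ N = 1
  have hKpow : ∀ g ∈ K, φ g ^ N = 1 := by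
    have hle : K ≤ (zpowGroupHom N : Abelianization G →* Abelianization G).ker.comap φ := by
      rw [hK, Subgroup.closure_le]
      rintro x ⟨i, rfl⟩
      rw [SetLike.mem_coe, Subgroup.mem_comap, MonoidHom.mem_ker]
      show φ (π (FreeGroup.of (Fin.castLE hmn i))) ^ N = 1
      have hαi : (φ (π (FreeGroup.of (Fin.castLE hmn i)))) ^ (α i) = 1 := by
        rw [← map_zpow]
        exact (hker _).2 (hgen i)
      rw [hN, ← Finset.mul_prod_erase Finset.univ α (Finset.mem_univ i), zpow_mul, hαi,
        one_zpow]
    intro g hg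
    have := hle hg
    rw [Subgroup.mem_comap, MonoidHom.mem_ker] at this
    exact this
  refine ⟨fun x hx y hy => hab x hx.2 y hy.2, fun g hg => ?_, ?_⟩
  · exact ⟨Subgroup.zpow_mem K hg N, (hker _).1 (by rw [map_zpow, hKpow g hg])⟩
  · -- finiteness of the quotient
    have hkerφ : φ.ker = commutator G := Subgroup.ext fun g => hker g
    have hKfg : Group.FG K := by
      rw [Group.fg_iff_subgroup_fg]
      exact (Subgroup.fg_iff K).2 ⟨_, hK.symm, Set.finite_range _⟩
    have htor : ∀ x : (φ.domRestrict K).range, x ^ N.natAbs = 1 := by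
      rintro ⟨x, g, rfl⟩
      have h1 : (φ.domRestrict K) g ^ N = 1 := hKpow (g : G) g.2
      have h2 : (φ.domRestrict K) g ^ N.natAbs = 1 := by
        rcases Int.natAbs_eq N with h | h
        · rw [← zpow_natCast, ← h, h1]
        · rw [← zpow_natCast, ← neg_neg (N.natAbs : ℤ), ← h, zpow_neg, h1, inv_one]
      exact Subtype.ext (by push_cast; exact h2)
    have htorsion : Monoid.IsTorsion (φ.domRestrict K).range := fun x =>
      isOfFinOrder_iff_pow_eq_one.2 ⟨N.natAbs, Int.natAbs_pos.2 hN0, htor x⟩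
    have hfin : Finite (φ.domRestrict K).range := CommGroup.finite_of_fg_torsion _ htorsion
    haveI hfinq : Finite (K ⧸ (φ.domRestrict K).ker) :=
      Finite.of_equiv _ (QuotientGroup.quotientKerEquivRange (φ.domRestrict K)).symm.toEquiv
    have heq : (commutator G).subgroupOf K = (φ.domRestrict K).ker := by
      rw [MonoidHom.ker_domRestrict, hkerφ]
    rw [heq]
    exact Subgroup.finiteIndex_of_finite_quotient
end
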